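/- For every integer n ≥ 2, every real number κ ≤ 0 and every constant ω_n > 0, the function s ↦ B^κ_n(s)/S^κ_n(s) is non-decreasing on (0, ∞). -/

import Mathlib

open intervalIntegral

-- Key integral inequality: ∫₀ᵃ S^{n-1} ≤ S(a)^n / ((n-1) cosh(ca))
theorem key_ineq (n : ℕ) (hn : 2 ≤ n) (c : ℝ)
    (S : ℝ → ℝ) (hS0 : S 0 = 0)
    (hSd : ∀ t, HasDerivAt S (Real.cosh (c * t)) t)
    (hsinh : ∀ t, Real.sinh (c * t) = c * S t)
    (a : ℝ) (ha : 0 ≤ a) :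
    (∫ u in (0:ℝ)..a, S u ^ (n-1)) * (((n:ℝ) - 1) * Real.cosh (c * a)) ≤ S a ^ n := by
  have hScont : Continuous S := by
    rw [continuous_iff_continuousAt]; exact fun t => (hSd t).continuousAt
  have hSmono : StrictMono S := by
    apply strictMono_of_deriv_pos
    intro x; rw [(hSd x).deriv]; exact Real.cosh_pos _
  have hSnonneg : ∀ t, 0 ≤ t → 0 ≤ S t := by
    intro t ht; rw [← hS0]; exact hSmono.monotone ht
  have hcosh2 : ∀ t, Real.cosh (c*t)^2 = 1 + c^2 * S t^2 := by
    intro t; rw [Real.cosh_sq, hsinh]; ring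
  have hm : (1:ℝ) ≤ (n:ℝ) - 1 := by
    have : (2:ℝ) ≤ (n:ℝ) := by exact_mod_cast hn
    linarith
  have hFcont : Continuous (fun u => S u ^ (n-1)) := hScont.pow _
  set g : ℝ → ℝ := fun t =>
    S t ^ n / (((n:ℝ) - 1) * Real.cosh (c*t)) - ∫ u in (0:ℝ)..t, S u ^ (n-1) with hg
  have hden : ∀ t, ((n:ℝ) - 1) * Real.cosh (c*t) ≠ 0 := by
    intro t
    exact ne_of_gt (mul_pos (by linarith) (Real.cosh_pos _))
  have hgd : ∀ t : ℝ, HasDerivAt g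
      (((n:ℝ) * S t ^ (n-1) * Real.cosh (c*t) * (((n:ℝ)-1) * Real.cosh (c*t))
        - S t ^ n * (((n:ℝ)-1) * (Real.sinh (c*t) * c)))
        / (((n:ℝ)-1) * Real.cosh (c*t))^2
        - S t ^ (n-1)) t := by
    intro t
    have hct : HasDerivAt (fun t : ℝ => c * t) c t := by
      simpa using (hasDerivAt_id t).const_mul c
    have hnum : HasDerivAt (fun t => S t ^ n) ((n:ℝ) * S t ^ (n-1) * Real.cosh (c*t)) t :=
      (hSd t).pow n
    have hcosh : HasDerivAt (fun t => Real.cosh (c*t)) (Real.sinh (c*t) * c) t :=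
      (Real.hasDerivAt_cosh (c*t)).comp t hct
    have hden' : HasDerivAt (fun t => ((n:ℝ)-1) * Real.cosh (c*t))
        (((n:ℝ)-1) * (Real.sinh (c*t) * c)) t := hcosh.const_mul _
    have hq := hnum.div hden' (hden t)
    have hint : HasDerivAt (fun t => ∫ u in (0:ℝ)..t, S u ^ (n-1)) (S t ^ (n-1)) t :=
      intervalIntegral.integral_hasDerivAt_right (hFcont.intervalIntegrable 0 t)
        (hFcont.stronglyMeasurable.stronglyMeasurableAtFilter) hFcont.continuousAt
    exact hq.sub hint
  have hgmono : MonotoneOn g (Set.Ici (0:ℝ)) := by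
    apply monotoneOn_of_deriv_nonneg (convex_Ici 0)
    · exact fun t _ => ((hgd t).continuousAt).continuousWithinAt
    · intro t ht
      exact ((hgd t).differentiableAt).differentiableWithinAt
    · intro t ht
      rw [interior_Ici] at ht
      rw [(hgd t).deriv]
      set A := S t with hA
      set C := Real.cosh (c*t) with hC
      have hApos : 0 ≤ A := hSnonneg t (le_of_lt ht)
      have hC1 : 1 ≤ C := Real.one_le_cosh _
      have hC2 : C^2 = 1 + c^2 * A^2 := hcosh2 t
      have hsinht : Real.sinh (c*t) = c * A := hsinh t
      rw [hsinht]
      rw [sub_nonneg, le_div_iff₀ (by positivity)]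
      have hpow : A ^ n = A ^ (n-1) * A := by
        conv_lhs => rw [show n = (n-1)+1 by omega, pow_succ]
      have hApow : 0 ≤ A ^ (n-1) := pow_nonneg hApos _
      rw [hpow]
      have e : (↑n*A^(n-1)*C*((↑n-1)*C) - A^(n-1)*A*((↑n-1)*(c*A*c)))
          - A^(n-1)*((↑n-1)*C)^2 = ((n:ℝ)-1)*A^(n-1)*(C^2 - c^2*A^2) := by ring
      have e2 : C^2 - c^2*A^2 = 1 := by linarith [hC2]
      nlinarith [mul_nonneg (by linarith : (0:ℝ) ≤ (n:ℝ)-1) hApow]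
  have hg0 : g 0 = 0 := by
    simp [hg, hS0, zero_pow (by omega : n ≠ 0)]
  have h2 := hgmono (Set.self_mem_Ici) (by exact ha : a ∈ Set.Ici (0:ℝ)) ha
  rw [hg0] at h2
  simp only [hg, sub_nonneg] at h2
  rw [le_div_iff₀ (mul_pos (by linarith) (Real.cosh_pos _))] at h2
  exact h2

theorem aux_mono (n : ℕ) (hn : 2 ≤ n) (ω : ℝ) (hω : 0 < ω) (c : ℝ)
    (S : ℝ → ℝ) (hS0 : S 0 = 0)
    (hSd : ∀ t, HasDerivAt S (Real.cosh (c * t)) t)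
    (hsinh : ∀ t, Real.sinh (c * t) = c * S t) :
    MonotoneOn (fun s => (∫ u in (0:ℝ)..s, ω * S u ^ (n-1)) / (ω * S s ^ (n-1)))
      (Set.Ioi (0:ℝ)) := by
  have hScont : Continuous S := by
    rw [continuous_iff_continuousAt]; exact fun t => (hSd t).continuousAt
  have hSmono : StrictMono S := by
    apply strictMono_of_deriv_pos
    intro x; rw [(hSd x).deriv]; exact Real.cosh_pos _
  have hSpos : ∀ t, 0 < t → 0 < S t := by
    intro t ht; rw [← hS0]; exact hSmono ht
  set F : ℝ → ℝ := fun u => ω * S u ^ (n-1) with hF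
  have hFcont : Continuous F := continuous_const.mul (hScont.pow _)
  have hFd : ∀ t, HasDerivAt F (ω * (((n-1:ℕ):ℝ) * S t ^ (n-1-1) * Real.cosh (c*t))) t :=
    fun t => ((hSd t).pow (n-1)).const_mul ω
  set B : ℝ → ℝ := fun s => ∫ u in (0:ℝ)..s, F u with hB
  have hBd : ∀ a : ℝ, HasDerivAt B (F a) a := fun a =>
    intervalIntegral.integral_hasDerivAt_right (hFcont.intervalIntegrable 0 a)
      (hFcont.stronglyMeasurable.stronglyMeasurableAtFilter) hFcont.continuousAt
  have hFpos : ∀ x : ℝ, 0 < x → 0 < F x := by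
    intro x hx
    have := hSpos x hx
    positivity
  have hcast : ((n-1:ℕ):ℝ) = (n:ℝ)-1 := by
    have : 1 ≤ n := by omega
    push_cast [this]; ring
  apply monotoneOn_of_deriv_nonneg (convex_Ioi 0)
  · intro x hx
    exact (((hBd x).continuousAt).div (hFcont.continuousAt)
      (ne_of_gt (hFpos x hx))).continuousWithinAt
  · intro x hx
    rw [interior_Ioi] at hx
    exact (((hBd x).div (hFd x) (ne_of_gt (hFpos x hx))).differentiableAt).differentiableWithinAt
  · intro x hx
    rw [interior_Ioi] at hx
    show 0 ≤ deriv (B / F) x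
    rw [((hBd x).div (hFd x) (ne_of_gt (hFpos x hx))).deriv]
    apply div_nonneg _ (sq_nonneg _)
    rw [sub_nonneg]
    have key := key_ineq n hn c S hS0 hSd hsinh x (le_of_lt hx)
    have hBx : B x = ω * ∫ u in (0:ℝ)..x, S u ^ (n-1) := by
      rw [hB]; simp only [hF]
      rw [intervalIntegral.integral_const_mul]
    set I := ∫ u in (0:ℝ)..x, S u ^ (n-1) with hI
    set A := S x with hA
    have hApos : 0 < A := hSpos x hx
    have epow : A^(n-1) * A^(n-1) = A^n * A^(n-1-1) := by
      rw [← pow_add, ← pow_add]; congr 1; omega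
    have h2 : ω^2 * A^(n-1-1) * (I*(((n:ℝ)-1)*Real.cosh (c*x)))
        ≤ ω^2 * A^(n-1-1) * A^n :=
      mul_le_mul_of_nonneg_left key (by positivity)
    calc B x * (ω * (((n-1:ℕ):ℝ) * A ^ (n-1-1) * Real.cosh (c*x)))
        = ω^2 * A^(n-1-1) * (I*(((n:ℝ)-1)*Real.cosh (c*x))) := by
          rw [hBx, hcast]; ring
      _ ≤ ω^2 * A^(n-1-1) * A^n := h2
      _ = F x * F x := by
          have hfx : F x = ω * A ^ (n-1) := rfl
          rw [hfx]; linear_combination (-(ω^2)) * epow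



open intervalIntegral in
/-- For n ≥ 2, κ ≤ 0, ω_n > 0, with S_κ(t) = sinh(√(−κ)·t)/√(−κ)
if κ < 0 and S_0(t) = t, S^κ_n(R) = ω_n·S_κ(R)^{n−1} and
B^κ_n(R) = ∫₀^R S^κ_n(s) ds, the function s ↦ B^κ_n(s)/S^κ_n(s) is
non-decreasing on (0, ∞). -/
theorem stmt_2 (n : ℕ) (hn : 2 ≤ n) (κ : ℝ) (hκ : κ ≤ 0) (ω : ℝ) (hω : 0 < ω)
    (S : ℝ → ℝ)
    (hS : ∀ t : ℝ, S t =
        if κ < 0 then Real.sinh (Real.sqrt (-κ) * t) / Real.sqrt (-κ) else t)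
    (Sn : ℝ → ℝ) (hSn : ∀ R : ℝ, Sn R = ω * (S R) ^ (n - 1))
    (Bn : ℝ → ℝ) (hBn : ∀ R : ℝ, Bn R = ∫ s in (0:ℝ)..R, Sn s) :
    MonotoneOn (fun s => Bn s / Sn s) (Set.Ioi (0:ℝ)) := by
  set c : ℝ := Real.sqrt (-κ) with hc
  have hfun : (fun s => Bn s / Sn s) =
      (fun s => (∫ u in (0:ℝ)..s, ω * S u ^ (n-1)) / (ω * S s ^ (n-1))) := by
    funext s
    rw [hBn, hSn]
    congr 1
    apply intervalIntegral.integral_congr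
    intro u _; exact hSn u
  rw [hfun]
  rcases lt_or_ge κ 0 with h | h
  · have hcpos : 0 < c := Real.sqrt_pos.mpr (by linarith)
    have hSt : ∀ t, S t = Real.sinh (c*t)/c := fun t => by rw [hS t, if_pos h]
    have hSfun : S = fun t => Real.sinh (c*t)/c := funext hSt
    apply aux_mono n hn ω hω c S
    · rw [hSt 0]; simp
    · intro t
      have h1 : HasDerivAt (fun t : ℝ => c * t) c t := by
        simpa using (hasDerivAt_id t).const_mul c
      have h2 := ((Real.hasDerivAt_sinh (c*t)).comp t h1).div_const c
      rw [hSfun]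
      have h3 : Real.cosh (c*t) * c / c = Real.cosh (c*t) := by
        rw [mul_div_assoc, div_self hcpos.ne', mul_one]
      rw [h3] at h2
      exact h2
    · intro t
      rw [hSt t, mul_div_cancel₀ _ hcpos.ne']
  · have hk : κ = 0 := le_antisymm hκ h
    have hc0 : c = 0 := by rw [hc, hk]; simp
    have hSt : ∀ t, S t = t := fun t => by
      rw [hS t, if_neg (by rw [hk]; exact lt_irrefl 0)]
    have hSfun : S = fun t => t := funext hSt
    apply aux_mono n hn ω hω c S
    · rw [hSt 0]
    · intro t
      rw [hSfun, hc0]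
      rw [zero_mul, Real.cosh_zero]
      exact hasDerivAt_id' t
    · intro t
      rw [hc0, hSt t]; simp
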